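/- Let X be the constructed set, and suppose X_1, ..., X_r is a Tverberg partition with x^i ∈ X_i. For each fixed i and each j with i ≠ i(j): since 0 ∈ conv(X_i) and x^i is the only point of X_i in A, there exist λ ∈ (0,1] and y ∈ conv(X_i \ A) with λ x^i + (1−λ) y = 0; moreover the j-th coordinate of y is strictly positive, which forces X_i ∩ A_j ≠ ∅. -/

import Mathlib

open Finset Set

/-- The standard basis vector `e^j` of `ℝ^d`. -/
noncomputable def stdVec (d : ℕ) (j : Fin d) : Fin d → ℝ := Pi.single j 1

/-- The set `A_j = {e^j, 2e^j, ..., (r-1)e^j}`. -/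
def Aset (d r : ℕ) (j : Fin d) : Set (Fin d → ℝ) :=
  {v | ∃ k : ℕ, 1 ≤ k ∧ k ≤ r - 1 ∧ v = (k : ℝ) • stdVec d j}

/-- The point `x^i`, with `x^i_j = 0` if `i = i(j)` and `x^i_j = -i` otherwise
(indices taken in `{1,...,r}`, so `Fin r` index `i` corresponds to `i+1`). -/
def xpt (d r : ℕ) (ι : Fin d → Fin r) (i : Fin r) : Fin d → ℝ :=
  fun j => if ι j = i then 0 else -((i : ℕ) + 1 : ℝ)

/-- The set `A = {x^1, ..., x^r}`. -/
def Apts (d r : ℕ) (ι : Fin d → Fin r) : Set (Fin d → ℝ) := Set.range (xpt d r ι)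

/-- The constructed set `X = A ∪ A_1 ∪ ⋯ ∪ A_d`. -/
def Xset (d r : ℕ) (ι : Fin d → Fin r) : Set (Fin d → ℝ) :=
  Apts d r ι ∪ ⋃ j, Aset d r j

/-- `P : Fin r → Set (Fin d → ℝ)` is a Tverberg partition of `X`:
a partition of `X` into pairwise disjoint parts whose convex hulls share a point. -/
def IsTverbergPartition (d r : ℕ) (X : Set (Fin d → ℝ))
    (P : Fin r → Set (Fin d → ℝ)) : Prop :=
  (⋃ i, P i) = X ∧ (∀ i i', i ≠ i' → Disjoint (P i) (P i')) ∧
    ∃ p : Fin d → ℝ, ∀ i, p ∈ convexHull ℝ (P i)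

/-- If `0 ∈ conv(X_i)` and `x^i` is the only point of `X_i` in `A`, then there are
`λ ∈ (0,1]` and `y ∈ conv(X_i \ A)` with `λx^i + (1-λ)y = 0`; moreover for any `j`
with `i ≠ i(j)` the `j`-th coordinate of `y` is positive, forcing `X_i ∩ A_j ≠ ∅`. -/
theorem part_meets_Aj_nonempty (d r : ℕ) (hd : 1 ≤ d) (hr : 1 ≤ r)
    (a : Fin r → ℕ) (hpos : ∀ i, 1 ≤ a i) (hle : ∀ i, a i ≤ d + 1)
    (hsum : ∑ i, a i = (d + 1) * (r - 1) + 1)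
    (ι : Fin d → Fin r)
    (hι : ∀ i', (Finset.univ.filter fun j => ι j = i').card = d + 1 - a i')
    (Xi : Set (Fin d → ℝ)) (hXi : Xi ⊆ Xset d r ι)
    (i : Fin r) (j : Fin d) (hij : ι j ≠ i)
    (h0 : (0 : Fin d → ℝ) ∈ convexHull ℝ Xi)
    (hA : Xi ∩ Apts d r ι = {xpt d r ι i}) :
    (∃ l ∈ Set.Ioc (0 : ℝ) 1, ∃ y ∈ convexHull ℝ (Xi \ Apts d r ι),
        l • xpt d r ι i + (1 - l) • y = 0 ∧ 0 < y j) ∧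
      (Xi ∩ Aset d r j).Nonempty := by
  classical
  set x := xpt d r ι i with hxdef
  set S := Xi \ Apts d r ι with hSdef
  have hxj : x j = -((i : ℕ) + 1 : ℝ) := by simp [hxdef, xpt, hij]
  have hxjneg : x j < 0 := by
    rw [hxj]
    have : (0:ℝ) < (i:ℕ) + 1 := by positivity
    linarith
  -- elements of S lie in some Aset
  have hSmem : ∀ v ∈ S, ∃ j' : Fin d, v ∈ Aset d r j' := by
    intro v hv
    rcases hXi hv.1 with hvA | hvU
    · exact absurd hvA hv.2
    · exact Set.mem_iUnion.1 hvU
  -- sum functional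
  have hsumlin : IsLinearMap ℝ (fun v : Fin d → ℝ => ∑ j', v j') := by
    constructor
    · intro u v; simp [Finset.sum_add_distrib]
    · intro c v; simp [Finset.mul_sum]
  have hSsum : ∀ y ∈ convexHull ℝ S, 1 ≤ ∑ j', y j' := by
    intro y hy
    have hconv : Convex ℝ {v : Fin d → ℝ | 1 ≤ ∑ j', v j'} :=
      convex_halfSpace_ge hsumlin 1
    have hsub : S ⊆ {v : Fin d → ℝ | 1 ≤ ∑ j', v j'} := by
      intro v hv
      rcases hSmem v hv with ⟨j', k, hk1, _, rfl⟩
      have hss : ∑ j'', ((k : ℝ) • stdVec d j') j'' = (k : ℝ) := by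
        simp [stdVec, Pi.single_apply]
      simp only [Set.mem_setOf_eq, hss]
      exact_mod_cast hk1
    exact convexHull_min hsub hconv hy
  -- Xi = insert x S
  have hXi_eq : Xi = insert x S := by
    ext v
    constructor
    · intro hv
      by_cases hvA : v ∈ Apts d r ι
      · left
        have h : v ∈ Xi ∩ Apts d r ι := ⟨hv, hvA⟩
        rw [hA] at h; exact h
      · right; exact ⟨hv, hvA⟩
    · rintro (rfl | hv)
      · have h : x ∈ Xi ∩ Apts d r ι := by rw [hA]; rfl
        exact h.1
      · exact hv.1
  -- S nonempty
  have hSne : S.Nonempty := by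
    rcases Set.eq_empty_or_nonempty S with hS | hS
    · exfalso
      rw [hXi_eq, hS] at h0
      simp only [insert_empty_eq, convexHull_singleton, Set.mem_singleton_iff] at h0
      have h := congrFun h0.symm j
      rw [h] at hxjneg
      simp at hxjneg
    · exact hS
  rw [hXi_eq, convexHull_insert hSne] at h0
  rw [mem_convexJoin] at h0
  rcases h0 with ⟨x', hx', y, hy, hseg⟩
  rw [Set.mem_singleton_iff] at hx'
  subst hx'
  rcases hseg with ⟨l, b, hl0, hb0, hlb, heq⟩
  have hlpos : 0 < l := by
    rcases lt_or_eq_of_le hl0 with h | h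
    · exact h
    · exfalso
      have hb1 : b = 1 := by linarith
      rw [← h, hb1] at heq
      simp only [zero_smul, one_smul, zero_add] at heq
      have hs := hSsum y hy
      rw [heq] at hs
      simp at hs
      linarith
  have hbpos : 0 < b := by
    rcases lt_or_eq_of_le hb0 with h | h
    · exact h
    · exfalso
      have hl1 : l = 1 := by linarith
      rw [← h, hl1] at heq
      simp only [one_smul, zero_smul, add_zero] at heq
      have h2 := congrFun heq j
      rw [h2] at hxjneg
      simp at hxjneg
  have hcoordj : l * x j + b * y j = 0 := by
    have h2 := congrFun heq j
    simpa using h2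
  have hyj : 0 < y j := by
    have hxy : b * y j = l * ((i : ℕ) + 1 : ℝ) := by rw [hxj] at hcoordj; linarith
    have h2 : 0 < l * ((i : ℕ) + 1 : ℝ) := by positivity
    nlinarith
  constructor
  · refine ⟨l, ⟨hlpos, by linarith⟩, y, hy, ?_, hyj⟩
    have hb : 1 - l = b := by linarith
    rw [hb]; exact heq
  · by_contra hempty
    rw [Set.not_nonempty_iff_eq_empty] at hempty
    have hsub : S ⊆ {v : Fin d → ℝ | v j = 0} := by
      intro v hv
      rcases hSmem v hv with ⟨j', hvA⟩
      by_cases hjj : j' = j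
      · exfalso
        subst hjj
        have h : v ∈ Xi ∩ Aset d r j' := ⟨hv.1, hvA⟩
        rw [hempty] at h
        exact h
      · rcases hvA with ⟨k, _, _, rfl⟩
        simp [stdVec, Pi.single_apply, hjj]
    have hconv : Convex ℝ {v : Fin d → ℝ | v j = 0} := by
      have hlin : IsLinearMap ℝ (fun v : Fin d → ℝ => v j) := ⟨fun u v => rfl, fun c v => rfl⟩
      exact convex_hyperplane hlin 0
    have h := convexHull_min hsub hconv hy
    rw [Set.mem_setOf_eq] at h
    linarith
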